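/- For any set X, the following are equivalent: (a) Top(X) is a G_δ subset of 2^{P(X)}; (b) Top(X) is an F_σ subset of 2^{P(X)}; (c) X is finite. -/

import Mathlib

/-- The Cantor-cube topology on `Set (Set X)` (identifying `𝒫(𝒫(X))` with `2^{𝒫(X)}`):
the product topology, whose subbasic open sets are
`A⁺ = {x | A ∈ x}` and `A⁻ = {x | A ∉ x}` for `A ⊆ X`. -/
def cantorTop (X : Type*) : TopologicalSpace (Set (Set X)) :=
  TopologicalSpace.generateFrom
    ({U | ∃ A : Set X, U = {x : Set (Set X) | A ∈ x}} ∪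
     {U | ∃ A : Set X, U = {x : Set (Set X) | A ∉ x}})

/-- `τ` is a topology on `X`: it contains `∅` and `X` and is closed under
pairwise intersections and arbitrary unions. -/
def IsTopologyOn {X : Type*} (τ : Set (Set X)) : Prop :=
  ∅ ∈ τ ∧ Set.univ ∈ τ ∧ (∀ a ∈ τ, ∀ b ∈ τ, a ∩ b ∈ τ) ∧ ∀ S ⊆ τ, ⋃₀ S ∈ τ

open scoped Topology
open TopologicalSpace Set

section CantorBasics
variable {X : Type*}

lemma isOpen_plus (A : Set X) : IsOpen[cantorTop X] {x : Set (Set X) | A ∈ x} :=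
  TopologicalSpace.GenerateOpen.basic _ (Or.inl ⟨A, rfl⟩)

lemma isOpen_minus (A : Set X) : IsOpen[cantorTop X] {x : Set (Set X) | A ∉ x} :=
  TopologicalSpace.GenerateOpen.basic _ (Or.inr ⟨A, rfl⟩)

lemma isClosed_plus (A : Set X) : IsClosed[cantorTop X] {x : Set (Set X) | A ∈ x} := by
  letI := cantorTop X
  have h := (isOpen_minus A).isClosed_compl
  convert h using 1
  ext x; simp

lemma isClosed_minus (A : Set X) : IsClosed[cantorTop X] {x : Set (Set X) | A ∉ x} := by
  letI := cantorTop X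
  have h := (isOpen_plus A).isClosed_compl
  convert h using 1
  ext x; simp

noncomputable def cantorEquiv (X : Type*) : Set (Set X) ≃ (Set X → Bool) :=
  Equiv.piCongrRight fun _ => Equiv.propEquivBool

lemma cantorEquiv_true {x : Set (Set X)} {A : Set X} :
    cantorEquiv X x A = true ↔ A ∈ x := by
  simp [cantorEquiv, Equiv.propEquivBool, Equiv.piCongrRight]
  exact @decide_eq_true_iff _ (Classical.propDecidable _)

lemma cantorEquiv_false {x : Set (Set X)} {A : Set X} :
    cantorEquiv X x A = false ↔ A ∉ x := by
  rw [← cantorEquiv_true (x := x) (A := A)]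
  cases h : cantorEquiv X x A <;> simp

lemma cantorTop_eq_induced :
    cantorTop X = TopologicalSpace.induced (cantorEquiv X) inferInstance := by
  letI := cantorTop X
  apply le_antisymm
  · rw [← continuous_iff_le_induced]
    apply continuous_pi
    intro A
    rw [continuous_def]
    intro s _
    by_cases ht : true ∈ s <;> by_cases hf : false ∈ s
    · convert (isOpen_univ : IsOpen[cantorTop X] univ) using 1
      ext x; simp only [mem_preimage, mem_univ, iff_true]
      rcases Bool.dichotomy ((cantorEquiv X) x A) with h | h <;> simp [h, ht, hf]
    · convert isOpen_plus A using 1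
      ext x
      simp only [mem_preimage, mem_setOf_eq]
      constructor
      · intro hx
        by_contra hA
        rw [cantorEquiv_false.2 hA] at hx; exact hf hx
      · intro hA
        rw [cantorEquiv_true.2 hA]; exact ht
    · convert isOpen_minus A using 1
      ext x
      simp only [mem_preimage, mem_setOf_eq]
      constructor
      · intro hx hA
        rw [cantorEquiv_true.2 hA] at hx; exact ht hx
      · intro hA
        rw [cantorEquiv_false.2 hA]; exact hf
    · convert (isOpen_empty : IsOpen[cantorTop X] ∅) using 1
      ext x; simp only [mem_preimage, mem_empty_iff_false, iff_false]
      intro hx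
      rcases Bool.dichotomy ((cantorEquiv X) x A) with h | h <;> rw [h] at hx
      exacts [hf hx, ht hx]
  · apply le_generateFrom
    rintro U (⟨A, rfl⟩ | ⟨A, rfl⟩)
    · refine ⟨(fun g => g A) ⁻¹' {true}, ?_, ?_⟩
      · exact (continuous_apply A).isOpen_preimage _ (isOpen_discrete _)
      · ext x
        simp only [mem_preimage, mem_singleton_iff, mem_setOf_eq]
        exact cantorEquiv_true
    · refine ⟨(fun g => g A) ⁻¹' {false}, ?_, ?_⟩
      · exact (continuous_apply A).isOpen_preimage _ (isOpen_discrete _)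
      · ext x
        simp only [mem_preimage, mem_singleton_iff, mem_setOf_eq]
        exact cantorEquiv_false

noncomputable def cantorHomeo (X : Type*) :
    @Homeomorph (Set (Set X)) (Set X → Bool) (cantorTop X) _ :=
  @Equiv.toHomeomorphOfIsInducing _ _ (cantorTop X) _ (cantorEquiv X)
    (@Topology.IsInducing.mk _ _ (cantorTop X) _ _ cantorTop_eq_induced)

lemma cantor_compact : @CompactSpace (Set (Set X)) (cantorTop X) := by
  letI := cantorTop X
  exact (cantorHomeo X).symm.compactSpace

lemma cantor_t2 : @T2Space (Set (Set X)) (cantorTop X) := by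
  letI := cantorTop X
  exact (cantorHomeo X).symm.t2Space

/-- Workhorse: basic neighborhoods in the Cantor cube. -/
lemma cantor_nbhd {U : Set (Set (Set X))} (hU : IsOpen[cantorTop X] U)
    {x : Set (Set X)} (hx : x ∈ U) :
    ∃ F G : Finset (Set X), (∀ A ∈ F, A ∈ x) ∧ (∀ A ∈ G, A ∉ x) ∧
      ∀ y : Set (Set X), (∀ A ∈ F, A ∈ y) → (∀ A ∈ G, A ∉ y) → y ∈ U := by
  classical
  induction hU with
  | basic s hs =>
    rcases hs with ⟨A, rfl⟩ | ⟨A, rfl⟩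
    · exact ⟨{A}, ∅, by simpa using hx, by simp, by intro y h _; simpa using h A (by simp)⟩
    · exact ⟨∅, {A}, by simp, by simpa using hx, by intro y _ h; simpa using h A (by simp)⟩
  | univ => exact ⟨∅, ∅, by simp, by simp, by intro y _ _; trivial⟩
  | inter s t _ _ ihs iht =>
    obtain ⟨F1, G1, h1, h2, h3⟩ := ihs hx.1
    obtain ⟨F2, G2, h4, h5, h6⟩ := iht hx.2
    refine ⟨F1 ∪ F2, G1 ∪ G2, ?_, ?_, ?_⟩
    · intro A hA; rcases Finset.mem_union.1 hA with h | h; exacts [h1 A h, h4 A h]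
    · intro A hA; rcases Finset.mem_union.1 hA with h | h; exacts [h2 A h, h5 A h]
    · intro y hF hG
      exact ⟨h3 y (fun A hA => hF A (Finset.mem_union_left _ hA))
          (fun A hA => hG A (Finset.mem_union_left _ hA)),
        h6 y (fun A hA => hF A (Finset.mem_union_right _ hA))
          (fun A hA => hG A (Finset.mem_union_right _ hA))⟩
  | sUnion S _ ih =>
    obtain ⟨t, htS, hxt⟩ := hx
    obtain ⟨F, G, h1, h2, h3⟩ := ih t htS hxt
    exact ⟨F, G, h1, h2, fun y hF hG => ⟨t, htS, h3 y hF hG⟩⟩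

lemma cantor_discrete_of_finite [Finite X] (s : Set (Set (Set X))) :
    IsOpen[cantorTop X] s := by
  classical
  letI := cantorTop X
  have hsing : ∀ x₀ : Set (Set X), IsOpen {x₀} := by
    intro x₀
    have heq : {x₀} = ⋂ A : Set X,
        (if A ∈ x₀ then {y : Set (Set X) | A ∈ y} else {y : Set (Set X) | A ∉ y}) := by
      ext y
      simp only [mem_singleton_iff, mem_iInter]
      constructor
      · rintro rfl A
        split <;> simpa
      · intro h
        ext A
        have := h A
        by_cases hA : A ∈ x₀ <;> simp [hA] at this <;> simp [hA, this]
    rw [heq]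
    exact isOpen_iInter_of_finite fun A => by
      split
      exacts [isOpen_plus A, isOpen_minus A]
  have : s = ⋃ x ∈ s, {x} := by simp
  rw [this]
  exact isOpen_biUnion fun x _ => hsing x

lemma isGδ_preimage {α β : Type*} [TopologicalSpace α] [TopologicalSpace β] {g : α → β}
    (hg : Continuous g) {s : Set β} (hs : IsGδ s) : IsGδ (g ⁻¹' s) := by
  obtain ⟨T, hTo, hTc, rfl⟩ := hs
  rw [Set.sInter_eq_biInter, Set.preimage_iInter₂]
  exact IsGδ.biInter hTc fun t ht => ((hTo t ht).preimage hg).isGδ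

end CantorBasics

section Baire
variable {Y : Type*} [TopologicalSpace Y] [BaireSpace Y] [Nonempty Y]

lemma baire_gdelta_core {M : Set Y} (h1 : M ∈ residual Y) (h2 : Mᶜ ∈ residual Y) : False := by
  have hd := dense_of_mem_residual (Filter.inter_mem h1 h2)
  rw [Set.inter_compl_self] at hd
  simpa using hd.nonempty

lemma baire_fsigma_core {M : Set Y} {C : ℕ → Set Y} (hC : ∀ n, IsClosed (C n))
    (hM : M = ⋃ n, C n) (hres : M ∈ residual Y) (hd : Dense Mᶜ) : False := by
  by_cases hint : ∀ n, interior (C n) = ∅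
  · have h2 : Mᶜ ∈ residual Y := by
      rw [hM, Set.compl_iUnion, countable_iInter_mem]
      intro n
      exact residual_of_dense_Gδ (hC n).isOpen_compl.isGδ
        (interior_eq_empty_iff_dense_compl.1 (hint n))
    exact baire_gdelta_core hres h2
  · push_neg at hint
    obtain ⟨n, hn⟩ := hint
    obtain ⟨y, hy⟩ := hd.inter_open_nonempty _ isOpen_interior hn
    exact hy.2 (hM ▸ Set.mem_iUnion.2 ⟨n, interior_subset hy.1⟩)
end Baire

section Combinatorics
variable {X : Type*} (f : ℕ ↪ X)

private def pp (n k : ℕ) : X := f (Nat.pair n k + 1)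

private def EE (n j : ℕ) : Set X := {y | ∃ a b, (a < n ∨ (a = n ∧ b < j)) ∧ y = pp f a b}

private def Dtop : Set X := {y | ∃ a b, y = pp f a b}

variable {f}

private lemma pp_inj {a b c d : ℕ} : pp f a b = pp f c d ↔ a = c ∧ b = d := by
  constructor
  · intro h
    have := f.injective h
    have := Nat.succ_injective this
    exact Nat.pair_eq_pair.1 this
  · rintro ⟨rfl, rfl⟩; rfl

private lemma mem_EE {a b n j : ℕ} : pp f a b ∈ EE f n j ↔ (a < n ∨ (a = n ∧ b < j)) := by
  constructor
  · rintro ⟨a', b', h, he⟩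
    obtain ⟨rfl, rfl⟩ := pp_inj.1 he
    exact h
  · intro h; exact ⟨a, b, h, rfl⟩

private lemma mem_Dtop {a b : ℕ} : pp f a b ∈ Dtop f := ⟨a, b, rfl⟩

private lemma f0_not_Dtop : f 0 ∉ Dtop f := by
  rintro ⟨a, b, h⟩
  exact Nat.succ_ne_zero _ (f.injective h.symm)

private lemma EE_subset_Dtop {n j : ℕ} : EE f n j ⊆ Dtop f := by
  rintro y ⟨a, b, _, rfl⟩; exact mem_Dtop

private lemma EE_mono {n j n' j' : ℕ} (h : n < n' ∨ (n = n' ∧ j ≤ j')) :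
    EE f n j ⊆ EE f n' j' := by
  rintro y ⟨a, b, hab, rfl⟩
  rw [mem_EE]
  rcases h with h | ⟨rfl, hj⟩ <;> rcases hab with h' | ⟨rfl, hb⟩
  · exact Or.inl (h'.trans h)
  · exact Or.inl h
  · exact Or.inl h'
  · exact Or.inr ⟨rfl, hb.trans_le hj⟩

private lemma EE_ne_univ {n j : ℕ} : EE f n j ≠ univ := fun h =>
  f0_not_Dtop (EE_subset_Dtop (h ▸ mem_univ (f 0)))

private lemma Dtop_ne_univ : Dtop f ≠ univ := fun h => f0_not_Dtop (h ▸ mem_univ (f 0))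

private lemma EE_ne_Dtop {n j : ℕ} : EE f n j ≠ Dtop f := by
  intro h
  have : pp f n j ∈ EE f n j := h ▸ mem_Dtop
  rw [mem_EE] at this
  omega

private lemma EE_nonempty {n j : ℕ} (h : 0 < n ∨ 0 < j) : (EE f n j).Nonempty :=
  ⟨pp f 0 0, mem_EE.2 (by omega)⟩

private lemma EE_succ_ne_empty {n k : ℕ} : EE f n (k + 1) ≠ ∅ := fun h => by
  have := EE_nonempty (f := f) (n := n) (j := k + 1) (by omega)
  rw [h] at this; exact this.ne_empty rfl

private lemma EE_lim_ne_empty {n : ℕ} : EE f (n + 1) 0 ≠ ∅ := fun h => by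
  have := EE_nonempty (f := f) (n := n + 1) (j := 0) (by omega)
  rw [h] at this; exact this.ne_empty rfl

private lemma Dtop_ne_empty : Dtop f ≠ ∅ := fun h => by
  have : pp f 0 0 ∈ Dtop f := mem_Dtop
  rw [h] at this; exact this

private lemma EE_inj {n j n' j' : ℕ} (h : EE f n j = EE f n' j') : n = n' ∧ j = j' := by
  by_contra hc
  have key : ∀ m i m' i', (m < m' ∨ (m = m' ∧ i < i')) → EE f m i ≠ EE f m' i' := by
    intro m i m' i' hlt he
    have : pp f m i ∈ EE f m' i' := mem_EE.2 (by omega)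
    rw [← he, mem_EE] at this
    omega
  rcases Nat.lt_trichotomy n n' with h1 | rfl | h1
  · exact key _ _ _ _ (Or.inl h1) h
  · rcases Nat.lt_trichotomy j j' with h2 | rfl | h2
    · exact key _ _ _ _ (Or.inr ⟨rfl, h2⟩) h
    · exact hc ⟨rfl, rfl⟩
    · exact key _ _ _ _ (Or.inr ⟨rfl, h2⟩) h.symm
  · exact key _ _ _ _ (Or.inl h1) h.symm

private lemma EE_comparable {n j n' j' : ℕ} : EE f n j ⊆ EE f n' j' ∨ EE f n' j' ⊆ EE f n j := by
  rcases Nat.lt_trichotomy n n' with h | rfl | h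
  · exact Or.inl (EE_mono (Or.inl h))
  · rcases Nat.le_total j j' with h | h
    · exact Or.inl (EE_mono (Or.inr ⟨rfl, h⟩))
    · exact Or.inr (EE_mono (Or.inr ⟨rfl, h⟩))
  · exact Or.inr (EE_mono (Or.inl h))

/-- finitely many chain sets in a finset, columnwise -/
private lemma finite_EE_col (s : Finset (Set X)) (n : ℕ) :
    {k : ℕ | EE f n (k + 1) ∈ s}.Finite := by
  have : {k : ℕ | EE f n (k + 1) ∈ s} = (fun k => EE f n (k + 1)) ⁻¹' ↑s := rfl
  rw [this]
  apply Set.Finite.preimage _ s.finite_toSet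
  intro a _ b _ h
  have := (EE_inj h).2
  omega

private lemma finite_EE_pairs (s : Finset (Set X)) :
    {q : ℕ × ℕ | EE f q.1 q.2 ∈ s}.Finite := by
  have : {q : ℕ × ℕ | EE f q.1 q.2 ∈ s} = (fun q : ℕ × ℕ => EE f q.1 q.2) ⁻¹' ↑s := rfl
  rw [this]
  apply Set.Finite.preimage _ s.finite_toSet
  intro a _ b _ h
  obtain ⟨h1, h2⟩ := EE_inj h
  exact Prod.ext h1 h2

end Combinatorics

section KBKC
variable {X : Type*} {f : ℕ ↪ X}
section
variable (f)


/-- The small compact set for the Gδ direction. -/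
def KB : Set (Set (Set X)) :=
  {x | ∅ ∈ x ∧ univ ∈ x ∧ ∀ A ∈ x, A = ∅ ∨ A = univ ∨ ∃ k, A = EE f 0 (k + 1)}

variable {f}



lemma KB_topology_iff {x : Set (Set X)} (hx : x ∈ KB f) :
    IsTopologyOn x ↔ {k | EE f 0 (k + 1) ∈ x}.Finite := by
  obtain ⟨h0, hu, hshape⟩ := hx
  constructor
  · intro htop
    by_contra hinf
    rw [← Set.not_infinite, not_not] at hinf
    set S : Set (Set X) := {A | A ∈ x ∧ ∃ k, A = EE f 0 (k + 1)} with hS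
    have hSx : S ⊆ x := fun A hA => hA.1
    have hU := htop.2.2.2 S hSx
    have hUeq : ⋃₀ S = EE f 1 0 := by
      apply subset_antisymm
      · apply sUnion_subset
        rintro A ⟨hAx, k, rfl⟩
        exact EE_mono (Or.inl (by omega))
      · rintro y ⟨a, b, hab, rfl⟩
        have ha : a = 0 := by omega
        subst ha
        obtain ⟨k, hk, hbk⟩ := hinf.exists_gt b
        exact ⟨EE f 0 (k + 1), ⟨hk, k, rfl⟩, mem_EE.2 (by omega)⟩
    rw [hUeq] at hU
    rcases hshape _ hU with h | h | ⟨k, h⟩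
    · exact EE_lim_ne_empty h
    · exact EE_ne_univ h
    · exact absurd (EE_inj h).1 (by omega)
  · intro hfin
    refine ⟨h0, hu, ?_, ?_⟩
    · intro a ha b hb
      rcases hshape a ha with rfl | rfl | ⟨k, rfl⟩
      · rw [Set.empty_inter]; exact h0
      · rw [Set.univ_inter]; exact hb
      rcases hshape b hb with rfl | rfl | ⟨k', rfl⟩
      · rw [Set.inter_empty]; exact h0
      · rw [Set.inter_univ]; exact ha
      rcases EE_comparable (f := f) (n := 0) (j := k+1) (n' := 0) (j' := k'+1) with h | h
      · rw [Set.inter_eq_left.2 h]; exact ha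
      · rw [Set.inter_eq_right.2 h]; exact hb
    · intro S hSx
      by_cases huS : univ ∈ S
      · have : ⋃₀ S = univ := subset_antisymm (subset_univ _) (subset_sUnion_of_mem huS)
        rw [this]; exact hu
      · set T : Set ℕ := {k | EE f 0 (k + 1) ∈ S} with hT
        have hTfin : T.Finite := hfin.subset (fun k hk => hSx hk)
        rcases T.eq_empty_or_nonempty with hTe | hTne
        · have : ⋃₀ S = ∅ := by
            apply subset_antisymm _ (empty_subset _)
            apply sUnion_subset
            intro A hA
            rcases hshape A (hSx hA) with rfl | rfl | ⟨k, rfl⟩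
            · exact Subset.rfl
            · exact absurd hA huS
            · exact absurd hA (by rw [Set.eq_empty_iff_forall_notMem] at hTe; exact hTe k)
          rw [this]; exact h0
        · obtain ⟨m, hmT, hmax⟩ : ∃ m ∈ T, ∀ a' ∈ T, id m ≤ id a' → id m = id a' := by
            obtain ⟨m, hm, hmx⟩ := Set.exists_max_image T id hTfin hTne
            exact ⟨m, hm, fun a ha hma => le_antisymm hma (hmx a ha)⟩
          have hmax' : ∀ k ∈ T, k ≤ m := by
            intro k hk
            by_contra hlt
            have := hmax k hk (by simp; omega)
            simp at this
            omega
          have : ⋃₀ S = EE f 0 (m + 1) := by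
            apply subset_antisymm
            · apply sUnion_subset
              intro A hA
              rcases hshape A (hSx hA) with rfl | rfl | ⟨k, rfl⟩
              · exact empty_subset _
              · exact absurd hA huS
              · exact EE_mono (Or.inr ⟨rfl, by have := hmax' k hA; omega⟩)
            · exact subset_sUnion_of_mem hmT
          rw [this]; exact hSx hmT

end
section
variable (f)


/-- The ω²-chain compact set, for the Fσ direction. -/
def KC : Set (Set (Set X)) :=
  {x | ∅ ∈ x ∧ univ ∈ x ∧ Dtop f ∈ x ∧
    (∀ A ∈ x, A = ∅ ∨ A = univ ∨ A = Dtop f ∨ ∃ n j, A = EE f n j) ∧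
    ∀ n k' k, k' ≤ k → EE f n (k + 1) ∈ x → EE f n (k' + 1) ∈ x}

variable {f}



lemma KC_topology_iff {x : Set (Set X)} (hx : x ∈ KC f) :
    IsTopologyOn x ↔ ∀ n, (∀ k, EE f n (k + 1) ∈ x) → EE f (n + 1) 0 ∈ x := by
  obtain ⟨h0, hu, hD, hshape, hinit⟩ := hx
  constructor
  · intro htop n hall
    set S : Set (Set X) := {A | ∃ k, A = EE f n (k + 1)} with hS
    have hSx : S ⊆ x := by rintro A ⟨k, rfl⟩; exact hall k
    have hU := htop.2.2.2 S hSx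
    have hUeq : ⋃₀ S = EE f (n + 1) 0 := by
      apply subset_antisymm
      · apply sUnion_subset
        rintro A ⟨k, rfl⟩
        exact EE_mono (Or.inl (by omega))
      · rintro y ⟨a, b, hab, rfl⟩
        have ha : a ≤ n := by omega
        exact ⟨EE f n (b + 1), ⟨b, rfl⟩, mem_EE.2 (by omega)⟩
    rwa [hUeq] at hU
  · intro hlim
    refine ⟨h0, hu, ?_, ?_⟩
    · intro a ha b hb
      rcases hshape a ha with rfl | rfl | rfl | ⟨n, j, rfl⟩
      · rw [Set.empty_inter]; exact h0
      · rw [Set.univ_inter]; exact hb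
      · rcases hshape b hb with rfl | rfl | rfl | ⟨n, j, rfl⟩
        · rw [Set.inter_empty]; exact h0
        · rw [Set.inter_univ]; exact ha
        · rw [Set.inter_self]; exact ha
        · rw [Set.inter_eq_right.2 EE_subset_Dtop]; exact hb
      · rcases hshape b hb with rfl | rfl | rfl | ⟨n', j', rfl⟩
        · rw [Set.inter_empty]; exact h0
        · rw [Set.inter_univ]; exact ha
        · rw [Set.inter_eq_left.2 EE_subset_Dtop]; exact ha
        · rcases EE_comparable (f := f) (n := n) (j := j) (n' := n') (j' := j') with h | h
          · rw [Set.inter_eq_left.2 h]; exact ha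
          · rw [Set.inter_eq_right.2 h]; exact hb
    · intro S hSx
      by_cases huS : univ ∈ S
      · have : ⋃₀ S = univ := subset_antisymm (subset_univ _) (subset_sUnion_of_mem huS)
        rw [this]; exact hu
      by_cases hDS : Dtop f ∈ S
      · have : ⋃₀ S = Dtop f := by
          apply subset_antisymm _ (subset_sUnion_of_mem hDS)
          apply sUnion_subset
          intro A hA
          rcases hshape A (hSx hA) with rfl | rfl | rfl | ⟨n, j, rfl⟩
          · exact empty_subset _
          · exact absurd hA huS
          · exact Subset.rfl
          · exact EE_subset_Dtop
        rw [this]; exact hD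
      set P : ℕ → ℕ → Prop := fun n j => EE f n j ∈ S with hP
      by_cases hne : ∃ n j, P n j
      swap
      · push_neg at hne
        have : ⋃₀ S = ∅ := by
          apply subset_antisymm _ (empty_subset _)
          apply sUnion_subset
          intro A hA
          rcases hshape A (hSx hA) with rfl | rfl | rfl | ⟨n, j, rfl⟩
          · exact Subset.rfl
          · exact absurd hA huS
          · exact absurd hA hDS
          · exact absurd hA (hne n j)
        rw [this]; exact h0
      by_cases hmax : ∃ n₀ j₀, P n₀ j₀ ∧ ∀ n j, P n j → (n < n₀ ∨ (n = n₀ ∧ j ≤ j₀))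
      · obtain ⟨n₀, j₀, hP0, hle⟩ := hmax
        have : ⋃₀ S = EE f n₀ j₀ := by
          apply subset_antisymm _ (subset_sUnion_of_mem hP0)
          apply sUnion_subset
          intro A hA
          rcases hshape A (hSx hA) with rfl | rfl | rfl | ⟨n, j, rfl⟩
          · exact empty_subset _
          · exact absurd hA huS
          · exact absurd hA hDS
          · exact EE_mono (hle n j hA)
        rw [this]; exact hSx hP0
      by_cases hub : ∀ m, ∃ n j, P n j ∧ m < n
      · have : ⋃₀ S = Dtop f := by
          apply subset_antisymm
          · apply sUnion_subset
            intro A hA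
            rcases hshape A (hSx hA) with rfl | rfl | rfl | ⟨n, j, rfl⟩
            · exact empty_subset _
            · exact absurd hA huS
            · exact Subset.rfl
            · exact EE_subset_Dtop
          · rintro y ⟨a, b, rfl⟩
            obtain ⟨n, j, hPnj, hn⟩ := hub a
            exact ⟨EE f n j, hPnj, mem_EE.2 (by omega)⟩
        rw [this]; exact hD
      -- bounded columns: take the largest occupied column n₀, necessarily with unbounded j's
      push_neg at hub
      obtain ⟨m, hm⟩ := hub
      set N : Set ℕ := {n | ∃ j, P n j} with hN
      have hNne : N.Nonempty := by obtain ⟨n, j, h⟩ := hne; exact ⟨n, j, h⟩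
      have hNbdd : BddAbove N := by
        refine ⟨m, ?_⟩
        rintro n ⟨j, hj⟩
        by_contra hc
        exact absurd (hm n j hj) (by omega)
      set n₀ : ℕ := sSup N with hn₀
      have hn₀N : n₀ ∈ N := Nat.sSup_mem hNne hNbdd
      have hn₀le : ∀ n ∈ N, n ≤ n₀ := fun n hn => le_csSup hNbdd hn
      set C : Set ℕ := {j | P n₀ j} with hC
      have hCne : C.Nonempty := hn₀N
      by_cases hCbdd : BddAbove C
      · exfalso
        apply hmax
        refine ⟨n₀, sSup C, Nat.sSup_mem hCne hCbdd, ?_⟩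
        intro n j hPnj
        have hnN : n ∈ N := ⟨j, hPnj⟩
        rcases Nat.lt_or_ge n n₀ with h | h
        · exact Or.inl h
        · have : n = n₀ := le_antisymm (hn₀le n hnN) h
          subst this
          exact Or.inr ⟨rfl, le_csSup hCbdd hPnj⟩
      · rw [not_bddAbove_iff] at hCbdd
        have hall : ∀ k, EE f n₀ (k + 1) ∈ x := by
          intro k
          obtain ⟨j, hjC, hjk⟩ := hCbdd k
          have hj1 : j - 1 + 1 = j := by omega
          have hmem : EE f n₀ (j - 1 + 1) ∈ x := by rw [hj1]; exact hSx hjC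
          exact hinit n₀ k (j - 1) (by omega) hmem
        have hEl : EE f (n₀ + 1) 0 ∈ x := hlim n₀ hall
        have : ⋃₀ S = EE f (n₀ + 1) 0 := by
          apply subset_antisymm
          · apply sUnion_subset
            intro A hA
            rcases hshape A (hSx hA) with rfl | rfl | rfl | ⟨n, j, rfl⟩
            · exact empty_subset _
            · exact absurd hA huS
            · exact absurd hA hDS
            · have : n ≤ n₀ := hn₀le n ⟨j, hA⟩
              exact EE_mono (Or.inl (by omega))
          · rintro y ⟨a, b, hab, rfl⟩
            have ha : a ≤ n₀ := by omega
            obtain ⟨j, hjC, hjb⟩ := hCbdd b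
            exact ⟨EE f n₀ j, hjC, mem_EE.2 (by omega)⟩
        rw [this]; exact hEl

end
end KBKC
section MainGdelta
variable {X : Type*}

lemma KB_closed (f : ℕ ↪ X) : IsClosed[cantorTop X] (KB f) := by
  letI := cantorTop X
  have heq : KB f = ({x : Set (Set X) | ∅ ∈ x} ∩ {x | Set.univ ∈ x}) ∩
      ⋂ (A : {A : Set X // ¬(A = ∅ ∨ A = Set.univ ∨ ∃ k, A = EE f 0 (k + 1))}),
        {x : Set (Set X) | (A : Set X) ∉ x} := by
    ext x
    constructor
    · rintro ⟨h0, hu, hsh⟩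
      refine ⟨⟨h0, hu⟩, ?_⟩
      rw [Set.mem_iInter]
      intro A
      intro hA
      exact A.2 (hsh _ hA)
    · rintro ⟨⟨h0, hu⟩, h⟩
      rw [Set.mem_iInter] at h
      refine ⟨h0, hu, fun A hA => ?_⟩
      by_contra hP
      exact (h ⟨A, hP⟩) hA
  rw [heq]
  exact (((isClosed_plus ∅).inter (isClosed_plus Set.univ)).inter
    (isClosed_iInter fun A => isClosed_minus (A : Set X)))

private def yB (f : ℕ ↪ X) (s : Finset ℕ) : Set (Set X) :=
  (fun k => EE f 0 (k + 1)) '' ↑s ∪ {∅, Set.univ}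

private lemma yB_mem_KB (f : ℕ ↪ X) (s : Finset ℕ) : yB f s ∈ KB f := by
  refine ⟨Or.inr (by simp), Or.inr (by simp), ?_⟩
  rintro A (⟨k, hk, rfl⟩ | hA)
  · exact Or.inr (Or.inr ⟨k, rfl⟩)
  · rcases hA with rfl | rfl
    · exact Or.inl rfl
    · exact Or.inr (Or.inl rfl)

private lemma KB_top_iff_yB {f : ℕ ↪ X} {x : Set (Set X)} (hx : x ∈ KB f) :
    IsTopologyOn x ↔ ∃ s : Finset ℕ, x = yB f s := by
  rw [KB_topology_iff hx]
  constructor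
  · intro hfin
    refine ⟨hfin.toFinset, ?_⟩
    ext A
    constructor
    · intro hA
      rcases hx.2.2 A hA with rfl | rfl | ⟨k, rfl⟩
      · exact Or.inr (Or.inl rfl)
      · exact Or.inr (Or.inr rfl)
      · exact Or.inl ⟨k, by simpa using hA, rfl⟩
    · rintro (⟨k, hk, rfl⟩ | hA)
      · simpa using (Set.Finite.mem_toFinset hfin).1 hk
      · rcases hA with rfl | rfl
        exacts [hx.1, hx.2.1]
  · rintro ⟨s, rfl⟩
    apply (s.finite_toSet).subset
    intro k hk
    rcases hk with ⟨k', hk', he⟩ | hA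
    · have := (EE_inj he.symm).2
      have : k' = k := by omega
      subst this; exact hk'
    · rcases hA with h | h
      · exact absurd h (EE_succ_ne_empty (f := f) (n := 0) (k := k))
      · exact absurd h (EE_ne_univ (f := f) (n := 0) (j := k + 1))

lemma topSet_not_gdelta (hX : Infinite X) :
    ¬ @IsGδ _ (cantorTop X) {τ : Set (Set X) | IsTopologyOn τ} := by
  classical
  intro hGδ
  letI := cantorTop X
  haveI : CompactSpace (Set (Set X)) := cantor_compact
  haveI : T2Space (Set (Set X)) := cantor_t2
  haveI := hX
  let f : ℕ ↪ X := Infinite.natEmbedding X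
  have hKBc : IsClosed (KB f) := KB_closed f
  haveI : CompactSpace ↥(KB f) := isCompact_iff_compactSpace.mp hKBc.isCompact
  haveI : Nonempty ↥(KB f) := ⟨⟨yB f ∅, yB_mem_KB f ∅⟩⟩
  haveI : BaireSpace ↥(KB f) := inferInstance
  set M : Set ↥(KB f) := Subtype.val ⁻¹' {τ : Set (Set X) | IsTopologyOn τ} with hM
  -- M is dense
  have hdense : Dense M := by
    rw [dense_iff_inter_open]
    intro U hU hUne
    obtain ⟨W, hWopen, hWeq⟩ := isOpen_induced_iff.1 hU
    obtain ⟨xh, hxhU⟩ := hUne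
    have hxW : (xh : Set (Set X)) ∈ W := by rw [← hWeq] at hxhU; exact hxhU
    obtain ⟨F, G, hF, hG, hFG⟩ := cantor_nbhd hWopen hxW
    set y : Set (Set X) := ↑F ∪ {∅, Set.univ} with hy
    have hyKB : y ∈ KB f := by
      refine ⟨Or.inr (by simp), Or.inr (by simp), ?_⟩
      rintro A (hA | hA)
      · exact xh.2.2.2 A (hF A hA)
      · rcases hA with rfl | rfl
        · exact Or.inl rfl
        · exact Or.inr (Or.inl rfl)
    have hyTop : IsTopologyOn y := by
      rw [KB_topology_iff hyKB]
      apply (finite_EE_col F 0).subset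
      intro k hk
      rcases hk with hk | hk
      · exact hk
      · rcases hk with h | h
        · exact absurd h (EE_succ_ne_empty)
        · exact absurd h (EE_ne_univ)
    refine ⟨⟨y, hyKB⟩, ?_, hyTop⟩
    rw [← hWeq]
    refine hFG y (fun A hA => Or.inl hA) ?_
    intro A hA
    rintro (hAy | hAy)
    · exact hG A hA (hF A hAy)
    · rcases hAy with rfl | rfl
      · exact hG _ hA xh.2.1
      · exact hG _ hA xh.2.2.1
  have h1 : M ∈ residual ↥(KB f) :=
    residual_of_dense_Gδ (isGδ_preimage continuous_subtype_val hGδ) hdense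
  -- M is meager: countable union of closed nowhere dense singletons
  have hMeq : M = ⋃ (s : Finset ℕ), (Subtype.val ⁻¹' {yB f s} : Set ↥(KB f)) := by
    ext xh
    simp only [Set.mem_iUnion, Set.mem_preimage, Set.mem_singleton_iff]
    exact KB_top_iff_yB xh.2
  have h2 : Mᶜ ∈ residual ↥(KB f) := by
    rw [hMeq, Set.compl_iUnion, countable_iInter_mem]
    intro s
    apply residual_of_dense_Gδ
    · exact (IsClosed.preimage continuous_subtype_val isClosed_singleton).isOpen_compl.isGδ
    · rw [dense_iff_inter_open]
      intro U hU hUne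
      obtain ⟨W, hWopen, hWeq⟩ := isOpen_induced_iff.1 hU
      obtain ⟨xh, hxhU⟩ := hUne
      have hxW : (xh : Set (Set X)) ∈ W := by rw [← hWeq] at hxhU; exact hxhU
      obtain ⟨F, G, hF, hG, hFG⟩ := cantor_nbhd hWopen hxW
      have hbad : ({k : ℕ | EE f 0 (k + 1) ∈ G} ∪ ↑s).Finite :=
        (finite_EE_col G 0).union (s.finite_toSet)
      obtain ⟨k₀, hk₀⟩ := hbad.infinite_compl.nonempty
      simp only [Set.mem_compl_iff, Set.mem_union, Set.mem_setOf_eq, not_or] at hk₀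
      set y : Set (Set X) := insert (EE f 0 (k₀ + 1)) (xh : Set (Set X)) with hy
      have hyKB : y ∈ KB f := by
        refine ⟨Set.mem_insert_iff.2 (Or.inr xh.2.1), Set.mem_insert_iff.2 (Or.inr xh.2.2.1), ?_⟩
        rintro A (rfl | hA)
        · exact Or.inr (Or.inr ⟨k₀, rfl⟩)
        · exact xh.2.2.2 A hA
      refine ⟨⟨y, hyKB⟩, ?_, ?_⟩
      · rw [← hWeq]
        refine hFG y (fun A hA => Set.mem_insert_iff.2 (Or.inr (hF A hA))) ?_
        rintro A hA (rfl | hAy)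
        · exact hk₀.1 hA
        · exact hG A hA hAy
      · simp only [Set.mem_compl_iff, Set.mem_preimage, Set.mem_singleton_iff]
        intro hcontr
        have : EE f 0 (k₀ + 1) ∈ yB f s := hcontr ▸ Set.mem_insert _ _
        rcases this with ⟨k', hk', he⟩ | hA
        · have := (EE_inj he.symm).2
          have : k' = k₀ := by omega
          subst this
          exact hk₀.2 hk'
        · rcases hA with h | h
          · exact EE_succ_ne_empty h
          · exact EE_ne_univ h
  exact baire_gdelta_core h1 h2

end MainGdelta
section MainFsigma
variable {X : Type*}

lemma KC_closed (f : ℕ ↪ X) : IsClosed[cantorTop X] (KC f) := by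
  classical
  letI := cantorTop X
  have heq : KC f = (({x : Set (Set X) | ∅ ∈ x} ∩ {x | Set.univ ∈ x}) ∩ {x | Dtop f ∈ x}) ∩
      ((⋂ (A : {A : Set X // ¬(A = ∅ ∨ A = Set.univ ∨ A = Dtop f ∨ ∃ n j, A = EE f n j)}),
        {x : Set (Set X) | (A : Set X) ∉ x}) ∩
       (⋂ (t : ℕ × ℕ × ℕ), if t.2.1 ≤ t.2.2 then
          ({x : Set (Set X) | EE f t.1 (t.2.2 + 1) ∉ x} ∪
           {x : Set (Set X) | EE f t.1 (t.2.1 + 1) ∈ x}) else Set.univ)) := by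
    ext x
    constructor
    · rintro ⟨h0, hu, hD, hsh, hinit⟩
      refine ⟨⟨⟨h0, hu⟩, hD⟩, ?_, ?_⟩
      · rw [Set.mem_iInter]
        intro A hA
        exact A.2 (hsh _ hA)
      · rw [Set.mem_iInter]
        rintro ⟨n, k', k⟩
        by_cases hle : k' ≤ k
        · rw [if_pos hle]
          by_cases hmem : EE f n (k + 1) ∈ x
          · exact Or.inr (hinit n k' k hle hmem)
          · exact Or.inl hmem
        · rw [if_neg hle]; trivial
    · rintro ⟨⟨⟨h0, hu⟩, hD⟩, h1, h2⟩
      rw [Set.mem_iInter] at h1 h2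
      refine ⟨h0, hu, hD, ?_, ?_⟩
      · intro A hA
        by_contra hP
        exact (h1 ⟨A, hP⟩) hA
      · intro n k' k hle hmem
        have := h2 ⟨n, k', k⟩
        rw [if_pos hle] at this
        rcases this with h | h
        · exact absurd hmem h
        · exact h
  rw [heq]
  refine IsClosed.inter (((isClosed_plus ∅).inter (isClosed_plus Set.univ)).inter
    (isClosed_plus (Dtop f))) (IsClosed.inter ?_ ?_)
  · exact isClosed_iInter fun A => isClosed_minus (A : Set X)
  · refine isClosed_iInter fun t => ?_
    split
    · exact (isClosed_minus _).union (isClosed_plus _)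
    · exact isClosed_univ

lemma topSet_not_fsigma (hX : Infinite X) {C : ℕ → Set (Set (Set X))}
    (hCcl : ∀ n, IsClosed[cantorTop X] (C n))
    (hCeq : {τ : Set (Set X) | IsTopologyOn τ} = ⋃ n, C n) : False := by
  classical
  letI := cantorTop X
  haveI : CompactSpace (Set (Set X)) := cantor_compact
  haveI : T2Space (Set (Set X)) := cantor_t2
  haveI := hX
  let f : ℕ ↪ X := Infinite.natEmbedding X
  have hKCc : IsClosed (KC f) := KC_closed f
  haveI : CompactSpace ↥(KC f) := isCompact_iff_compactSpace.mp hKCc.isCompact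
  have hx0 : ({∅, Set.univ, Dtop f} : Set (Set X)) ∈ KC f := by
    refine ⟨by simp, by simp, by simp, ?_, ?_⟩
    · rintro A (rfl | rfl | rfl)
      · exact Or.inl rfl
      · exact Or.inr (Or.inl rfl)
      · exact Or.inr (Or.inr (Or.inl rfl))
    · intro n k' k hle hmem
      rcases hmem with h | h | h
      · exact absurd h (EE_succ_ne_empty (f := f) (n := n) (k := k))
      · exact absurd h (EE_ne_univ (f := f) (n := n) (j := k + 1))
      · exact absurd h (EE_ne_Dtop (f := f) (n := n) (j := k + 1))
  haveI : Nonempty ↥(KC f) := ⟨⟨_, hx0⟩⟩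
  haveI : BaireSpace ↥(KC f) := inferInstance
  set M : Set ↥(KC f) := Subtype.val ⁻¹' {τ : Set (Set X) | IsTopologyOn τ} with hM
  -- M is comeager
  set fail : ℕ → Set ↥(KC f) := fun n =>
    {xh : ↥(KC f) | (∀ k, EE f n (k + 1) ∈ (xh : Set (Set X))) ∧
      EE f (n + 1) 0 ∉ (xh : Set (Set X))} with hfail
  have hMeq2 : M = ⋂ n, (fail n)ᶜ := by
    ext xh
    simp only [Set.mem_iInter, Set.mem_compl_iff, hfail, Set.mem_setOf_eq, hM,
      Set.mem_preimage]
    rw [KC_topology_iff xh.2]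
    constructor
    · intro h n hc
      exact hc.2 (h n hc.1)
    · intro h n hall
      by_contra hc
      exact h n ⟨hall, hc⟩
  have h1 : M ∈ residual ↥(KC f) := by
    rw [hMeq2, countable_iInter_mem]
    intro n
    have hcl : IsClosed (fail n) := by
      have : fail n = (⋂ k, Subtype.val ⁻¹' {x : Set (Set X) | EE f n (k + 1) ∈ x}) ∩
          Subtype.val ⁻¹' {x : Set (Set X) | EE f (n + 1) 0 ∉ x} := by
        ext xh
        simp [hfail, Set.mem_iInter]
      rw [this]
      exact (isClosed_iInter fun k =>
          (isClosed_plus _).preimage continuous_subtype_val).inter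
        ((isClosed_minus _).preimage continuous_subtype_val)
    apply residual_of_dense_Gδ hcl.isOpen_compl.isGδ
    rw [dense_iff_inter_open]
    intro U hU hUne
    obtain ⟨W, hWopen, hWeq⟩ := isOpen_induced_iff.1 hU
    obtain ⟨xh, hxhU⟩ := hUne
    have hxW : (xh : Set (Set X)) ∈ W := by rw [← hWeq] at hxhU; exact hxhU
    obtain ⟨F, G, hF, hG, hFG⟩ := cantor_nbhd hWopen hxW
    obtain ⟨b, hb⟩ := (finite_EE_col F n).bddAbove
    set y : Set (Set X) :=
      {A ∈ (xh : Set (Set X)) | ¬∃ k, b + 1 ≤ k ∧ A = EE f n (k + 1)} with hy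
    have hyKC : y ∈ KC f := by
      obtain ⟨h0, hu, hD, hsh, hinit⟩ := xh.2
      refine ⟨⟨h0, ?_⟩, ⟨hu, ?_⟩, ⟨hD, ?_⟩, ?_, ?_⟩
      · rintro ⟨k, _, h⟩
        exact EE_succ_ne_empty (f := f) (n := n) (k := k) h.symm
      · rintro ⟨k, _, h⟩
        exact EE_ne_univ (f := f) (n := n) (j := k + 1) h.symm
      · rintro ⟨k, _, h⟩
        exact EE_ne_Dtop (f := f) (n := n) (j := k + 1) h.symm
      · intro A hA
        exact hsh A hA.1
      · rintro m k' k hle ⟨hmx, hmnot⟩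
        refine ⟨hinit m k' k hle hmx, ?_⟩
        rintro ⟨k'', hk'', he⟩
        obtain ⟨rfl, hk⟩ := EE_inj he
        have hk2 : k'' = k' := by omega
        subst hk2
        apply hmnot
        exact ⟨k, by omega, rfl⟩
    refine ⟨⟨y, hyKC⟩, ?_, ?_⟩
    · rw [← hWeq]
      refine hFG y ?_ ?_
      · intro A hA
        refine ⟨hF A hA, ?_⟩
        rintro ⟨k, hk, rfl⟩
        have : k ∈ {k : ℕ | EE f n (k + 1) ∈ F} := hA
        have := hb this
        omega
      · intro A hA hAy
        exact hG A hA hAy.1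
    · simp only [Set.mem_compl_iff, hfail, Set.mem_setOf_eq, not_and]
      intro hall
      exfalso
      exact (hall (b + 1)).2 ⟨b + 1, le_refl _, rfl⟩
  -- complement of M is dense
  have h2 : Dense Mᶜ := by
    rw [dense_iff_inter_open]
    intro U hU hUne
    obtain ⟨W, hWopen, hWeq⟩ := isOpen_induced_iff.1 hU
    obtain ⟨xh, hxhU⟩ := hUne
    have hxW : (xh : Set (Set X)) ∈ W := by rw [← hWeq] at hxhU; exact hxhU
    obtain ⟨F, G, hF, hG, hFG⟩ := cantor_nbhd hWopen hxW
    obtain ⟨b, hb⟩ := ((finite_EE_pairs (F ∪ G)).image Prod.fst).bddAbove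
    have hkey : ∀ m j, EE f m j ∈ F ∪ G → m ≤ b := by
      intro m j hmem
      exact hb ⟨⟨m, j⟩, hmem, rfl⟩
    set n₀ : ℕ := b + 1 with hn₀
    set y : Set (Set X) :=
      {A ∈ (xh : Set (Set X)) | A ≠ EE f (n₀ + 1) 0} ∪
        {A | ∃ k, A = EE f n₀ (k + 1)} with hy
    have hyKC : y ∈ KC f := by
      obtain ⟨h0, hu, hD, hsh, hinit⟩ := xh.2
      refine ⟨Or.inl ⟨h0, fun h => EE_lim_ne_empty (f := f) (n := n₀) h.symm⟩,
        Or.inl ⟨hu, fun h => EE_ne_univ (f := f) h.symm⟩,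
        Or.inl ⟨hD, fun h => EE_ne_Dtop (f := f) h.symm⟩, ?_, ?_⟩
      · rintro A (⟨hA, _⟩ | ⟨k, rfl⟩)
        · exact hsh A hA
        · exact Or.inr (Or.inr (Or.inr ⟨n₀, k + 1, rfl⟩))
      · rintro m k' k hle (⟨hmx, _⟩ | ⟨k'', he⟩)
        · by_cases hm : m = n₀
          · subst hm
            exact Or.inr ⟨k', rfl⟩
          · refine Or.inl ⟨hinit m k' k hle hmx, ?_⟩
            intro he
            have := (EE_inj he).2
            omega
        · obtain ⟨rfl, hk⟩ := EE_inj he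
          exact Or.inr ⟨k', rfl⟩
    refine ⟨⟨y, hyKC⟩, ?_, ?_⟩
    · rw [← hWeq]
      refine hFG y ?_ ?_
      · intro A hA
        refine Or.inl ⟨hF A hA, ?_⟩
        rintro rfl
        have := hkey (n₀ + 1) 0 (Finset.mem_union_left _ hA)
        omega
      · rintro A hA (⟨hAx, _⟩ | ⟨k, rfl⟩)
        · exact hG A hA hAx
        · have := hkey n₀ (k + 1) (Finset.mem_union_right _ hA)
          omega
    · simp only [Set.mem_compl_iff, hM, Set.mem_preimage, Set.mem_setOf_eq]
      rw [KC_topology_iff hyKC]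
      intro hlim
      have hall : ∀ k, EE f n₀ (k + 1) ∈ y := fun k => Or.inr ⟨k, rfl⟩
      rcases hlim n₀ hall with ⟨_, hne⟩ | ⟨k, he⟩
      · exact hne rfl
      · have := (EE_inj he).2
        omega
  exact baire_fsigma_core (C := fun n => Subtype.val ⁻¹' C n)
    (fun n => (hCcl n).preimage continuous_subtype_val)
    (by rw [hM, hCeq, Set.preimage_iUnion]) h1 h2

end MainFsigma
theorem stmt10 {X : Type*} :
    (@IsGδ _ (cantorTop X) {τ : Set (Set X) | IsTopologyOn τ} ↔ Finite X) ∧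
    ((∃ C : ℕ → Set (Set (Set X)), (∀ n, IsClosed[cantorTop X] (C n)) ∧
        {τ : Set (Set X) | IsTopologyOn τ} = ⋃ n, C n) ↔ Finite X) := by
  constructor
  · constructor
    · intro h
      by_contra hfin
      exact topSet_not_gdelta (not_finite_iff_infinite.mp hfin) h
    · intro hfin
      letI := cantorTop X
      haveI := hfin
      exact (cantor_discrete_of_finite _).isGδ
  · constructor
    · rintro ⟨C, hCcl, hCeq⟩
      by_contra hfin
      exact topSet_not_fsigma (not_finite_iff_infinite.mp hfin) hCcl hCeq
    · intro hfin
      letI := cantorTop X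
      haveI := hfin
      refine ⟨fun _ => {τ : Set (Set X) | IsTopologyOn τ}, ?_, ?_⟩
      · intro n
        exact ⟨cantor_discrete_of_finite _⟩
      · rw [Set.iUnion_const]
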